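/- Let X be a group and (X, ·, 𝒞) a convex group, i.e., 𝒞 is a convex structure on X such that multiplication m : X × X → X is convexity-preserving with respect to the product convex structure {C₁ × C₂ | Cᵢ ∈ 𝒞} and inversion r : X → X is convexity-preserving. Then (X, ·, ω_L(𝒞)) is a stratified L-convex group, i.e., m and r are L-convexity-preserving with respect to ω_L(𝒞) and its product ω_L(𝒞) × ω_L(𝒞). -/
import Mathlib


open scoped Classical

variable {X : Type*}

def IsConvex {X : Type*} (𝒞 : Set (Set X)) : Prop :=
  ∅ ∈ 𝒞 ∧ Set.univ ∈ 𝒞 ∧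
  (∀ S : Set (Set X), S ⊆ 𝒞 → ⋂₀ S ∈ 𝒞) ∧
  (∀ S : Set (Set X), S ⊆ 𝒞 → DirectedOn (· ⊆ ·) S → ⋃₀ S ∈ 𝒞)

def CP {X Y : Type*} (f : X → Y) (𝒞 : Set (Set X)) (𝒢 : Set (Set Y)) : Prop :=
  ∀ G ∈ 𝒢, f ⁻¹' G ∈ 𝒞

/-- product convex structure on `X × Y` -/
def prodConvex {X Y : Type*} (𝒞 : Set (Set X)) (𝒟 : Set (Set Y)) : Set (Set (X × Y)) :=
  {S | ∃ C ∈ 𝒞, ∃ D ∈ 𝒟, S = C ×ˢ D}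

def LCP {L : Type*} [CompleteLattice L] {X Y : Type*} (f : X → Y)
    (𝒞 : Set (X → L)) (𝔾 : Set (Y → L)) : Prop :=
  ∀ A ∈ 𝔾, (A ∘ f) ∈ 𝒞

def fprod {L : Type*} [CompleteLattice L] {X Y : Type*} (A : X → L) (B : Y → L) :
    X × Y → L :=
  fun p => A p.1 ⊓ B p.2

def prodStruct {L : Type*} [CompleteLattice L] {X Y : Type*}
    (𝒞 : Set (X → L)) (𝒟 : Set (Y → L)) : Set (X × Y → L) :=
  {F | ∃ C ∈ 𝒞, ∃ D ∈ 𝒟, F = fprod C D}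

noncomputable def chiSet {L : Type*} [CompleteLattice L] {X : Type*} (C : Set X) : X → L :=
  fun x => if x ∈ C then ⊤ else ⊥

def omegaBase (L : Type*) [CompleteLattice L] {X : Type*} (𝒞 : Set (Set X)) :
    Set (X → L) :=
  {A | ∃ a : L, ∃ C ∈ 𝒞, A = fun x => a ⊓ chiSet C x}

def omegaL (L : Type*) [CompleteLattice L] {X : Type*} (𝒞 : Set (Set X)) :
    Set (X → L) :=
  {A | ∃ S ⊆ omegaBase L 𝒞, DirectedOn (· ≤ ·) S ∧ A = sSup S}

section Rect

variable {L : Type*} [CompletelyDistribLattice L]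

lemma chiSet_prod {X Y : Type*} (C : Set X) (D : Set Y) (p : X × Y) :
    (chiSet (C ×ˢ D) p : L) = chiSet C p.1 ⊓ chiSet D p.2 := by
  by_cases h1 : p.1 ∈ C <;> by_cases h2 : p.2 ∈ D <;>
    simp [chiSet, Set.mem_prod, h1, h2]

lemma bot_mem_omegaL {X : Type*} {𝒞 : Set (Set X)} (hC : ∅ ∈ 𝒞) :
    (⊥ : X → L) ∈ omegaL L 𝒞 := by
  refine ⟨{⊥}, ?_, ?_, by rw [sSup_singleton]⟩
  · rintro _ rfl
    exact ⟨⊥, ∅, hC, by funext x; simp⟩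
  · rintro _ rfl _ rfl
    exact ⟨⊥, rfl, le_rfl, le_rfl⟩

lemma rect_lemma {X Y : Type*} {𝒞 : Set (Set X)} {𝒟 : Set (Set Y)}
    (hCe : ∅ ∈ 𝒞) (hDe : ∅ ∈ 𝒟) {F : X × Y → L}
    (hF : F ∈ omegaL L (prodConvex 𝒞 𝒟)) :
    F ∈ prodStruct (omegaL L 𝒞) (omegaL L 𝒟) := by
  obtain ⟨S, hSb, hSd, rfl⟩ := hF
  have hrep : ∀ s ∈ S, ∃ a : L, ∃ C₁, C₁ ∈ 𝒞 ∧ ∃ C₂, C₂ ∈ 𝒟 ∧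
      s = fun p => a ⊓ (chiSet C₁ p.1 ⊓ chiSet C₂ p.2) := by
    intro s hs
    obtain ⟨a, E, ⟨C₁, hC₁, C₂, hC₂, rfl⟩, rfl⟩ := hSb hs
    exact ⟨a, C₁, hC₁, C₂, hC₂, by funext p; rw [chiSet_prod]⟩
  choose a C1 hC1 C2 hC2 heq using hrep
  -- witnesses for non-bot elements
  have hw : ∀ s (hs : s ∈ S), s ≠ ⊥ →
      a s hs ≠ ⊥ ∧ ∃ p : X × Y, p.1 ∈ C1 s hs ∧ p.2 ∈ C2 s hs := by
    intro s hs hne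
    have : ∃ p, s p ≠ ⊥ := by
      by_contra hcon
      push_neg at hcon
      exact hne (funext fun p => hcon p)
    obtain ⟨p, hp⟩ := this
    rw [heq s hs] at hp
    by_cases h1 : p.1 ∈ C1 s hs
    · by_cases h2 : p.2 ∈ C2 s hs
      · refine ⟨?_, p, h1, h2⟩
        intro hab
        apply hp
        simp [chiSet, h1, h2, hab]
      · exact absurd (by simp [chiSet, h2]) hp
    · exact absurd (by simp [chiSet, h1]) hp
  -- value at points of the rectangle
  have hval : ∀ s (hs : s ∈ S) (p : X × Y), p.1 ∈ C1 s hs → p.2 ∈ C2 s hs →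
      s p = a s hs := by
    intro s hs p h1 h2
    rw [congrFun (heq s hs) p]
    simp [chiSet, h1, h2]
  -- monotonicity transfers to components
  have hmono : ∀ s (hs : s ∈ S) t (ht : t ∈ S), s ≠ ⊥ → s ≤ t →
      a s hs ≤ a t ht ∧ (∀ x ∈ C1 s hs, x ∈ C1 t ht) ∧
        (∀ y ∈ C2 s hs, y ∈ C2 t ht) := by
    intro s hs t ht hne hle
    obtain ⟨ha, p₀, h1, h2⟩ := hw s hs hne
    have hat : ∀ p : X × Y, p.1 ∈ C1 s hs → p.2 ∈ C2 s hs →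
        a s hs ≤ a t ht ∧ p.1 ∈ C1 t ht ∧ p.2 ∈ C2 t ht := by
      intro p hp1 hp2
      have h3 : a s hs ≤ t p := by
        have := hle p
        rwa [hval s hs p hp1 hp2] at this
      rw [heq t ht] at h3
      by_cases k1 : p.1 ∈ C1 t ht
      · by_cases k2 : p.2 ∈ C2 t ht
        · simp only [chiSet, k1, k2, if_true, inf_top_eq] at h3
          exact ⟨h3, k1, k2⟩
        · exact absurd (le_bot_iff.1 (h3.trans (by simp [chiSet, k2]))) ha
      · exact absurd (le_bot_iff.1 (h3.trans (by simp [chiSet, k1]))) ha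
    refine ⟨(hat p₀ h1 h2).1, ?_, ?_⟩
    · intro x hx
      exact (hat (x, p₀.2) hx h2).2.1
    · intro y hy
      exact (hat (p₀.1, y) h1 hy).2.2
  -- componentwise order
  have hcomp1 : ∀ s (hs : s ∈ S) t (ht : t ∈ S), s ≠ ⊥ → s ≤ t →
      (fun x => a s hs ⊓ chiSet (C1 s hs) x) ≤
        (fun x => a t ht ⊓ chiSet (C1 t ht) x : X → L) := by
    intro s hs t ht hne hle x
    obtain ⟨hab, hm1, _⟩ := hmono s hs t ht hne hle
    by_cases hx : x ∈ C1 s hs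
    · simp only [chiSet, hx, hm1 x hx, if_true, inf_top_eq]
      exact hab
    · simp [chiSet, hx]
  have hcomp2 : ∀ s (hs : s ∈ S) t (ht : t ∈ S), s ≠ ⊥ → s ≤ t →
      (fun y => a s hs ⊓ chiSet (C2 s hs) y) ≤
        (fun y => a t ht ⊓ chiSet (C2 t ht) y : Y → L) := by
    intro s hs t ht hne hle y
    obtain ⟨hab, _, hm2⟩ := hmono s hs t ht hne hle
    by_cases hy : y ∈ C2 s hs
    · simp only [chiSet, hy, hm2 y hy, if_true, inf_top_eq]
      exact hab
    · simp [chiSet, hy]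
  by_cases hT : ∀ s ∈ S, s = ⊥
  · have hbot : sSup S = ⊥ := sSup_eq_bot.2 hT
    refine ⟨⊥, bot_mem_omegaL hCe, ⊥, bot_mem_omegaL hDe, ?_⟩
    rw [hbot]
    funext p
    simp [fprod]
  · push_neg at hT
    set S₁ : Set (X → L) :=
      {g | ∃ s, ∃ hs : s ∈ S, s ≠ ⊥ ∧ g = fun x => a s hs ⊓ chiSet (C1 s hs) x} with hS₁
    set S₂ : Set (Y → L) :=
      {g | ∃ s, ∃ hs : s ∈ S, s ≠ ⊥ ∧ g = fun y => a s hs ⊓ chiSet (C2 s hs) y} with hS₂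
    have hdir1 : DirectedOn (· ≤ ·) S₁ := by
      rintro _ ⟨s, hs, hne, rfl⟩ _ ⟨t, ht, hne', rfl⟩
      obtain ⟨u, hu, h1, h2⟩ := hSd s hs t ht
      have hune : u ≠ ⊥ := fun hub => hne (le_bot_iff.1 (hub ▸ h1))
      exact ⟨_, ⟨u, hu, hune, rfl⟩, hcomp1 s hs u hu hne h1, hcomp1 t ht u hu hne' h2⟩
    have hdir2 : DirectedOn (· ≤ ·) S₂ := by
      rintro _ ⟨s, hs, hne, rfl⟩ _ ⟨t, ht, hne', rfl⟩
      obtain ⟨u, hu, h1, h2⟩ := hSd s hs t ht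
      have hune : u ≠ ⊥ := fun hub => hne (le_bot_iff.1 (hub ▸ h1))
      exact ⟨_, ⟨u, hu, hune, rfl⟩, hcomp2 s hs u hu hne h1, hcomp2 t ht u hu hne' h2⟩
    refine ⟨sSup S₁, ⟨S₁, ?_, hdir1, rfl⟩, sSup S₂, ⟨S₂, ?_, hdir2, rfl⟩, ?_⟩
    · rintro _ ⟨s, hs, hne, rfl⟩
      exact ⟨a s hs, C1 s hs, hC1 s hs, rfl⟩
    · rintro _ ⟨s, hs, hne, rfl⟩
      exact ⟨a s hs, C2 s hs, hC2 s hs, rfl⟩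
    · funext p
      show sSup S p = fprod (sSup S₁) (sSup S₂) p
      rw [fprod, sSup_apply, sSup_apply, sSup_apply]
      refine le_antisymm (iSup_le fun ⟨s, hs⟩ => ?_) ?_
      · by_cases hne : s = ⊥
        · simp [hne]
        · have m1 : (fun x => a s hs ⊓ chiSet (C1 s hs) x) ∈ S₁ := ⟨s, hs, hne, rfl⟩
          have m2 : (fun y => a s hs ⊓ chiSet (C2 s hs) y) ∈ S₂ := ⟨s, hs, hne, rfl⟩
          have e1 : a s hs ⊓ chiSet (C1 s hs) p.1 ≤ ⨆ g : S₁, (g : X → L) p.1 :=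
            le_iSup_of_le ⟨_, m1⟩ le_rfl
          have e2 : a s hs ⊓ chiSet (C2 s hs) p.2 ≤ ⨆ g : S₂, (g : Y → L) p.2 :=
            le_iSup_of_le ⟨_, m2⟩ le_rfl
          calc s p = a s hs ⊓ (chiSet (C1 s hs) p.1 ⊓ chiSet (C2 s hs) p.2) := by
                  simpa using congrFun (heq s hs) p
            _ = (a s hs ⊓ chiSet (C1 s hs) p.1) ⊓ (a s hs ⊓ chiSet (C2 s hs) p.2) :=
                  inf_inf_distrib_left _ _ _
            _ ≤ _ := inf_le_inf e1 e2
      · rw [iSup_inf_eq]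
        refine iSup_le fun ⟨g, hg⟩ => ?_
        rw [inf_iSup_eq]
        refine iSup_le fun ⟨g', hg'⟩ => ?_
        obtain ⟨s, hs, hne, rfl⟩ := hg
        obtain ⟨t, ht, hne', rfl⟩ := hg'
        obtain ⟨u, hu, h1, h2⟩ := hSd s hs t ht
        have hune : u ≠ ⊥ := fun hub => hne (le_bot_iff.1 (hub ▸ h1))
        calc (a s hs ⊓ chiSet (C1 s hs) p.1) ⊓ (a t ht ⊓ chiSet (C2 t ht) p.2)
            ≤ (a u hu ⊓ chiSet (C1 u hu) p.1) ⊓ (a u hu ⊓ chiSet (C2 u hu) p.2) :=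
              inf_le_inf (hcomp1 s hs u hu hne h1 p.1) (hcomp2 t ht u hu hne' h2 p.2)
          _ = u p := by
              rw [congrFun (heq u hu) p]
              exact (inf_inf_distrib_left _ _ _).symm
          _ ≤ _ := le_iSup_of_le ⟨u, hu⟩ le_rfl

end Rect

section Aux

variable {L : Type*} [CompletelyDistribLattice L]

lemma comp_mem_omegaL {X Y : Type*} (f : Y → X) {𝒞 : Set (Set X)} {𝒟 : Set (Set Y)}
    (hf : ∀ C ∈ 𝒞, f ⁻¹' C ∈ 𝒟) {A : X → L} (hA : A ∈ omegaL L 𝒞) :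
    (A ∘ f) ∈ omegaL L 𝒟 := by
  obtain ⟨S, hSb, hSd, rfl⟩ := hA
  refine ⟨(fun g => g ∘ f) '' S, ?_, ?_, ?_⟩
  · rintro _ ⟨g, hg, rfl⟩
    obtain ⟨a, C, hC, rfl⟩ := hSb hg
    exact ⟨a, f ⁻¹' C, hf C hC, by funext y; simp [chiSet, Function.comp, Set.mem_preimage]⟩
  · rintro _ ⟨g, hg, rfl⟩ _ ⟨g', hg', rfl⟩
    obtain ⟨u, hu, h1, h2⟩ := hSd g hg g' hg'
    exact ⟨u ∘ f, ⟨u, hu, rfl⟩, fun y => h1 (f y), fun y => h2 (f y)⟩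
  · funext y
    rw [Function.comp_apply, sSup_apply, sSup_apply]
    refine le_antisymm (iSup_le fun g => ?_) (iSup_le fun g => ?_)
    · exact le_iSup_of_le ⟨g.1 ∘ f, ⟨g.1, g.2, rfl⟩⟩ le_rfl
    · obtain ⟨g0, hg0, hge⟩ := g.2
      exact le_iSup_of_le ⟨g0, hg0⟩ (by rw [← hge]; rfl)

end Aux


theorem convex_group_to_lconvex_group (L : Type*) [CompletelyDistribLattice L]
    [Group X] (𝒞 : Set (Set X)) (h : IsConvex 𝒞)
    (hm : CP (fun p : X × X => p.1 * p.2) (prodConvex 𝒞 𝒞) 𝒞)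
    (hr : CP (fun x : X => x⁻¹) 𝒞 𝒞) :
    LCP (fun p : X × X => p.1 * p.2)
        (prodStruct (omegaL L 𝒞) (omegaL L 𝒞)) (omegaL L 𝒞) ∧
    LCP (fun x : X => x⁻¹) (omegaL L 𝒞) (omegaL L 𝒞) := by
  constructor
  · intro A hA
    exact rect_lemma h.1 h.1 (comp_mem_omegaL (fun p : X × X => p.1 * p.2) hm hA)
  · intro A hA
    exact comp_mem_omegaL (fun x : X => x⁻¹) hr hA
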